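/- Let M be nonsingular with MJMᵀ = J, and define H̄(y) = H(M⁻¹y). If y_t solves the Hamiltonian descent ODE for H̄ with target y⋆ = Mz⋆, and z_t = M⁻¹y_t, then z_t solves the Hamiltonian descent ODE for H with target z⋆; in particular H̄(y_t) = H(z_t) for all t. -/

import Mathlib

open RealInnerProductSpace

/-- The standard symplectic matrix `J` on `ℝ^{2n}`: `J (x, p) = (p, -x)`. -/
def Jmap (n : ℕ) (v : EuclideanSpace ℝ (Fin n ⊕ Fin n)) :
    EuclideanSpace ℝ (Fin n ⊕ Fin n) :=
  WithLp.toLp 2 (fun i => Sum.elim (fun a => v (Sum.inr a)) (fun a => -(v (Sum.inl a))) i)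

lemma grad_comp {E : Type} [NormedAddCommGroup E] [InnerProductSpace ℝ E] [CompleteSpace E]
    (H : E → ℝ) (g : E) (x : E) (A : E →L[ℝ] E)
    (h : HasGradientAt H g (A x)) :
    HasGradientAt (fun v => H (A v)) (ContinuousLinearMap.adjoint A g) x := by
  rw [hasGradientAt_iff_hasFDerivAt]
  have := (h.hasFDerivAt).comp x A.hasFDerivAt
  refine this.congr_fderiv ?_
  ext v
  simp [InnerProductSpace.toDual_apply_apply, ContinuousLinearMap.adjoint_inner_left]

lemma adj_adj_symm {E : Type} [NormedAddCommGroup E] [InnerProductSpace ℝ E] [CompleteSpace E]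
    (M : E ≃L[ℝ] E) (g : E) :
    ContinuousLinearMap.adjoint (M : E →L[ℝ] E)
      (ContinuousLinearMap.adjoint (M.symm : E →L[ℝ] E) g) = g := by
  rw [← ContinuousLinearMap.comp_apply, ← ContinuousLinearMap.adjoint_comp]
  have : (M.symm : E →L[ℝ] E) ∘L (M : E →L[ℝ] E) = ContinuousLinearMap.id ℝ E := by
    ext v; simp
  rw [this, ContinuousLinearMap.adjoint_id]; rfl

/-- Affine invariance of Hamiltonian descent: if `M` is nonsingular with
`M J Mᵀ = J` and `H̄(y) = H(M⁻¹ y)`, and `y_t` solves the Hamiltonian descent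
ODE for `H̄` with target `y⋆ = M z⋆`, then `z_t = M⁻¹ y_t` solves the
Hamiltonian descent ODE for `H` with target `z⋆`; in particular
`H̄(y_t) = H(z_t)` for all `t`. -/
theorem stmt5 (n : ℕ)
    (H : EuclideanSpace ℝ (Fin n ⊕ Fin n) → ℝ)
    (hH : ∀ w, HasGradientAt H (gradient H w) w)
    (zstar : EuclideanSpace ℝ (Fin n ⊕ Fin n))
    (M : EuclideanSpace ℝ (Fin n ⊕ Fin n) ≃L[ℝ] EuclideanSpace ℝ (Fin n ⊕ Fin n))
    (hM : ∀ v, M (Jmap n (ContinuousLinearMap.adjoint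
      (M : EuclideanSpace ℝ (Fin n ⊕ Fin n) →L[ℝ] EuclideanSpace ℝ (Fin n ⊕ Fin n)) v))
      = Jmap n v)
    (Hbar : EuclideanSpace ℝ (Fin n ⊕ Fin n) → ℝ)
    (hHbar : ∀ y, Hbar y = H (M.symm y))
    (y : ℝ → EuclideanSpace ℝ (Fin n ⊕ Fin n))
    (hy : ∀ t, HasDerivAt y (Jmap n (gradient Hbar (y t)) + M zstar - y t) t)
    (z : ℝ → EuclideanSpace ℝ (Fin n ⊕ Fin n))
    (hzy : ∀ t, z t = M.symm (y t)) :
    (∀ t, HasDerivAt z (Jmap n (gradient H (z t)) + zstar - z t) t) ∧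
      ∀ t, Hbar (y t) = H (z t) := by
  let E := EuclideanSpace ℝ (Fin n ⊕ Fin n)
  have hHbarf : Hbar = fun v => H ((M.symm : E →L[ℝ] E) v) := funext hHbar
  -- gradient of Hbar
  have hgrad : ∀ w : E, gradient Hbar w
      = ContinuousLinearMap.adjoint (M.symm : E →L[ℝ] E) (gradient H (M.symm w)) := by
    intro w
    have := grad_comp H (gradient H (M.symm w)) w (M.symm : E →L[ℝ] E) (hH _)
    rw [hHbarf]
    exact this.gradient
  -- symplectic property transported
  have hJ : ∀ g : E, M.symm (Jmap n (ContinuousLinearMap.adjoint (M.symm : E →L[ℝ] E) g))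
      = Jmap n g := by
    intro g
    have h1 := hM (ContinuousLinearMap.adjoint (M.symm : E →L[ℝ] E) g)
    rw [adj_adj_symm] at h1
    rw [← h1]
    exact M.symm_apply_apply _
  constructor
  · intro t
    have hd : HasDerivAt (fun s => M.symm (y s))
        (M.symm (Jmap n (gradient Hbar (y t)) + M zstar - y t)) t :=
      (M.symm : E →L[ℝ] E).hasFDerivAt.comp_hasDerivAt t (hy t)
    have hz : z = fun s => M.symm (y s) := funext hzy
    rw [hz]
    convert hd using 1
    rw [map_sub, map_add, M.symm_apply_apply, hgrad, hJ]
  · intro t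
    rw [hHbar, hzy]
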